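/- Let 𝒜 and ℬ be classes of objects in an abelian category 𝒞 such that 𝒜 is closed under direct summands and 0 ∈ ℬ. The following are equivalent: (a) Ext^1(A, B) = 0 for all A ∈ 𝒜 and B ∈ ℬ; (b) 𝕊_l(𝒜, ℬ) = ℰ_l(𝒜, ℬ); (c) (𝒜, ℬ) is a complete left cotorsion pair cut along ℰ_l(𝒜, ℬ); (d) 𝒜 = ^{⊥1}ℬ ∩ ℰ_l(𝒜, ℬ). -/

import Mathlib

namespace CutPaper

open CategoryTheory CategoryTheory.Limits CategoryTheory.Abelian ZeroObject

universe w v u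

variable {C : Type u} [Category.{v} C] [Abelian C]

/-- There exists a short exact sequence `0 ⟶ X ⟶ Y ⟶ Z ⟶ 0` in `C`. -/
def SES (X Y Z : C) : Prop :=
  ∃ (f : X ⟶ Y) (g : Y ⟶ Z) (zero : f ≫ g = 0),
    (ShortComplex.mk f g zero).ShortExact

/-- A class of objects is closed under isomorphisms. -/
def ClosedUnderIso (A : Set C) : Prop :=
  ∀ ⦃X Y : C⦄, (X ≅ Y) → X ∈ A → Y ∈ A

/-- A class of objects is closed under direct summands (i.e. retracts). -/
def ClosedUnderDirectSummands (A : Set C) : Prop :=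
  ∀ ⦃X Y : C⦄ (i : X ⟶ Y) (r : Y ⟶ X), i ≫ r = 𝟙 X → Y ∈ A → X ∈ A

/-- A class of objects is closed under extensions. -/
def ClosedUnderExtensions (A : Set C) : Prop :=
  ∀ ⦃X Y Z : C⦄, SES X Y Z → X ∈ A → Z ∈ A → Y ∈ A

/-- A class of objects is closed under kernels of epimorphisms between its objects. -/
def ClosedUnderEpiKernels (A : Set C) : Prop :=
  ∀ ⦃X Y Z : C⦄, SES X Y Z → Y ∈ A → Z ∈ A → X ∈ A

/-- A class of objects is closed under cokernels of monomorphisms between its objects. -/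
def ClosedUnderMonoCokernels (A : Set C) : Prop :=
  ∀ ⦃X Y Z : C⦄, SES X Y Z → X ∈ A → Y ∈ A → Z ∈ A

/-- A class is left thick if it is closed under extensions, epi-kernels and direct summands. -/
def LeftThick (A : Set C) : Prop :=
  ClosedUnderExtensions A ∧ ClosedUnderEpiKernels A ∧ ClosedUnderDirectSummands A

/-- A class is right thick if closed under extensions, mono-cokernels and direct summands. -/
def RightThick (A : Set C) : Prop :=
  ClosedUnderExtensions A ∧ ClosedUnderMonoCokernels A ∧ ClosedUnderDirectSummands A

/-- A class is thick if it is both left and right thick. -/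
def IsThickClass (A : Set C) : Prop := LeftThick A ∧ RightThick A

/-- The smallest thick class containing `F`. -/
def ThickClosure (F : Set C) : Set C := ⋂₀ {T : Set C | IsThickClass T ∧ F ⊆ T}

/-- A class is closed under finite (binary) coproducts. -/
def ClosedUnderBinaryCoproducts (A : Set C) : Prop :=
  ∀ ⦃X Y : C⦄, X ∈ A → Y ∈ A → (X ⊞ Y) ∈ A

/-- `ω` is a relative cogenerator in `A`: `ω ⊆ A` and every `X ∈ A` fits in a short
exact sequence `0 → X → W → X' → 0` with `W ∈ ω`, `X' ∈ A`. -/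
def IsRelativeCogenerator (ω A : Set C) : Prop :=
  ω ⊆ A ∧ ∀ X ∈ A, ∃ W X', W ∈ ω ∧ X' ∈ A ∧ SES X W X'

/-- `ν` is a relative generator in `ω`: `ν ⊆ ω` and every `W ∈ ω` fits in a short
exact sequence `0 → W' → V → W → 0` with `V ∈ ν`, `W' ∈ ω`. -/
def IsRelativeGenerator (ν ω : Set C) : Prop :=
  ν ⊆ ω ∧ ∀ W ∈ ω, ∃ V W', V ∈ ν ∧ W' ∈ ω ∧ SES W' V W

/-- The objects of `B`-resolution dimension at most `n` (the class `B^∧_n`). -/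
def ResDimLE (B : Set C) : ℕ → Set C
  | 0 => {X | ∃ B₀ ∈ B, Nonempty (X ≅ B₀)}
  | (n + 1) => ResDimLE B n ∪ {X | ∃ K B₀, K ∈ ResDimLE B n ∧ B₀ ∈ B ∧ SES K B₀ X}

/-- The class `B^∧` of objects of finite `B`-resolution dimension. -/
def ResFin (B : Set C) : Set C := {X | ∃ n, X ∈ ResDimLE B n}

/-- The `B`-resolution dimension of an object, valued in `ℕ∞`. -/
noncomputable def resDim (B : Set C) (X : C) : ℕ∞ :=
  sInf ((fun n : ℕ => (n : ℕ∞)) '' {n | X ∈ ResDimLE B n})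

/-- The objects of `B`-coresolution dimension at most `n` (the class `B^∨_n`). -/
def CoresDimLE (B : Set C) : ℕ → Set C
  | 0 => {X | ∃ B₀ ∈ B, Nonempty (X ≅ B₀)}
  | (n + 1) => CoresDimLE B n ∪ {X | ∃ B₀ K, B₀ ∈ B ∧ K ∈ CoresDimLE B n ∧ SES X B₀ K}

/-- The `B`-coresolution dimension of an object, valued in `ℕ∞`. -/
noncomputable def coresDim (B : Set C) (X : C) : ℕ∞ :=
  sInf ((fun n : ℕ => (n : ℕ∞)) '' {n | X ∈ CoresDimLE B n})

/-- The class of `(𝒳, 𝒴)`-Gorenstein projective objects: 0-th cycles of exact,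
`Hom(-, 𝒴)`-acyclic complexes with components in `𝒳`. -/
def GorensteinProj (𝒳 𝒴 : Set C) : Set C :=
  {M | ∃ K : ChainComplex C ℤ,
    (∀ m : ℤ, K.X m ∈ 𝒳) ∧
    (∀ m : ℤ, K.ExactAt m) ∧
    (∀ Y₀ ∈ 𝒴, ∀ m : ℤ, ∀ f : K.X m ⟶ Y₀, K.d (m + 1) m ≫ f = 0 →
      ∃ g : K.X (m - 1) ⟶ Y₀, K.d m (m - 1) ≫ g = f) ∧
    Nonempty (M ≅ K.cycles 0)}

section HasExt

variable [HasExt.{w} C]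

/-- `Ext¹(A, B) = 0`. -/
def ext1Zero (A B : C) : Prop := Subsingleton (Abelian.Ext.{w} A B 1)

/-- `Extⁱ(A, B) = 0` for all `i ≥ 1`. -/
def extVanish (A B : C) : Prop := ∀ i : ℕ, 1 ≤ i → Subsingleton (Abelian.Ext.{w} A B i)

/-- `Extⁱ(X, Y) = 0` for all `i ≥ 1`, `X ∈ 𝒜`, `Y ∈ ℬ`. -/
def ExtPairVanish (𝒜 ℬ : Set C) : Prop := ∀ X ∈ 𝒜, ∀ Y ∈ ℬ, extVanish.{w} X Y

/-- The right `Ext¹`-orthogonal complement `𝒜^{⊥1}`. -/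
def rightPerp1 (𝒜 : Set C) : Set C := {N | ∀ X ∈ 𝒜, ext1Zero.{w} X N}

/-- The total right orthogonal complement `𝒜^{⊥}`. -/
def rightPerp (𝒜 : Set C) : Set C := {N | ∀ X ∈ 𝒜, extVanish.{w} X N}

/-- The left `Ext¹`-orthogonal complement `^{⊥1}ℬ`. -/
def leftPerp1 (ℬ : Set C) : Set C := {M | ∀ Y ∈ ℬ, ext1Zero.{w} M Y}

/-- `(𝒜, ℬ)` is a left cotorsion pair cut along `𝒮`. -/
def LeftCutCotorsion (𝒜 ℬ 𝒮 : Set C) : Prop :=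
  ClosedUnderDirectSummands 𝒜 ∧ 𝒜 ∩ 𝒮 = leftPerp1.{w} ℬ ∩ 𝒮

/-- `(𝒜, ℬ)` is a complete left cotorsion pair cut along `𝒮`. -/
def CompleteLeftCutCotorsion (𝒜 ℬ 𝒮 : Set C) : Prop :=
  LeftCutCotorsion.{w} 𝒜 ℬ 𝒮 ∧ ∀ S ∈ 𝒮, ∃ B₀ A₀, B₀ ∈ ℬ ∧ A₀ ∈ 𝒜 ∧ SES B₀ A₀ S

/-- `(𝒜, ℬ)` is a right cotorsion pair cut along `𝒮`. -/
def RightCutCotorsion (𝒜 ℬ 𝒮 : Set C) : Prop :=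
  ClosedUnderDirectSummands ℬ ∧ ℬ ∩ 𝒮 = rightPerp1.{w} 𝒜 ∩ 𝒮

/-- `(𝒜, ℬ)` is a complete right cotorsion pair cut along `𝒮`. -/
def CompleteRightCutCotorsion (𝒜 ℬ 𝒮 : Set C) : Prop :=
  RightCutCotorsion.{w} 𝒜 ℬ 𝒮 ∧ ∀ S ∈ 𝒮, ∃ B₀ A₀, B₀ ∈ ℬ ∧ A₀ ∈ 𝒜 ∧ SES S B₀ A₀

/-- `(𝒜, ℬ)` is a complete cotorsion pair cut along `𝒮`. -/
def CompleteCutCotorsion (𝒜 ℬ 𝒮 : Set C) : Prop :=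
  CompleteLeftCutCotorsion.{w} 𝒜 ℬ 𝒮 ∧ CompleteRightCutCotorsion.{w} 𝒜 ℬ 𝒮

/-- `(𝒜, ℬ)` is a complete left cotorsion pair in `C`. -/
def CompleteLeftCotorsionPair (𝒜 ℬ : Set C) : Prop :=
  𝒜 = leftPerp1.{w} ℬ ∧ ∀ X : C, ∃ B₀ A₀, B₀ ∈ ℬ ∧ A₀ ∈ 𝒜 ∧ SES B₀ A₀ X

/-- `(𝒜, ℬ)` is a complete cotorsion pair in `C`. -/
def CompleteCotorsionPair (𝒜 ℬ : Set C) : Prop :=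
  CompleteLeftCotorsionPair.{w} 𝒜 ℬ ∧ ℬ = rightPerp1.{w} 𝒜 ∧
    ∀ X : C, ∃ B₀ A₀, B₀ ∈ ℬ ∧ A₀ ∈ 𝒜 ∧ SES X B₀ A₀

/-- `(𝒳, ω)` is a left Frobenius pair in `C`. -/
def LeftFrobenius (𝒳 ω : Set C) : Prop :=
  LeftThick 𝒳 ∧ ClosedUnderDirectSummands ω ∧
    ExtPairVanish.{w} 𝒳 ω ∧ IsRelativeCogenerator ω 𝒳

/-- `(𝒳, ω)` is a left Frobenius pair cut along `𝒮`. -/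
def LeftFrobeniusCutAlong (𝒳 ω 𝒮 : Set C) : Prop :=
  LeftThick 𝒳 ∧
  LeftFrobenius.{w} (𝒳 ∩ 𝒮) (ω ∩ 𝒮) ∧
  (ExtPairVanish.{w} (ω ∩ 𝒮) ω ∧ IsRelativeGenerator (ω ∩ 𝒮) ω) ∧
  (ClosedUnderExtensions ω ∧ ClosedUnderDirectSummands ω)

/-- `(𝒜, ℬ)` is a left weak AB context in `C`. -/
def LeftWeakABContext (𝒜 ℬ : Set C) : Prop :=
  LeftFrobenius.{w} 𝒜 (𝒜 ∩ ℬ) ∧ RightThick ℬ ∧ ℬ ⊆ ResFin 𝒜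

/-- `(𝒜, ℬ)` is a left weak AB context cut along `𝒮`. -/
def LeftWeakABContextCutAlong (𝒜 ℬ 𝒮 : Set C) : Prop :=
  LeftFrobeniusCutAlong.{w} 𝒜 (𝒜 ∩ ℬ) 𝒮 ∧ RightThick (ℬ ∩ 𝒮) ∧
    ℬ ∩ 𝒮 ⊆ ResFin (𝒜 ∩ 𝒮)

/-- `(𝒳, 𝒴)` is a GP-admissible pair. -/
def GPAdmissible (𝒳 𝒴 : Set C) : Prop :=
  ExtPairVanish.{w} 𝒳 𝒴 ∧
  (∀ M : C, ∃ X₀, X₀ ∈ 𝒳 ∧ ∃ p : X₀ ⟶ M, Epi p) ∧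
  ClosedUnderBinaryCoproducts 𝒳 ∧ ClosedUnderBinaryCoproducts 𝒴 ∧
  ClosedUnderExtensions 𝒳 ∧
  IsRelativeCogenerator (𝒳 ∩ 𝒴) 𝒳

/-- The class `ℰ_l(𝒜, ℬ)` of objects admitting a suitable left approximation. -/
def EClassLeft (𝒜 ℬ : Set C) : Set C :=
  {X | ∃ B₀ A₀, B₀ ∈ ℬ ∧ A₀ ∈ 𝒜 ∧ SES B₀ A₀ X}

/-- The maximal left cotorsion cut `𝕊_l(𝒜, ℬ)`. -/
def MaxLeftCut (𝒜 ℬ : Set C) : Set C :=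
  ⋃₀ {𝒮 | CompleteLeftCutCotorsion.{w} 𝒜 ℬ 𝒮}

/-- `pd(M) ≤ n`, via vanishing of `Ext` in degrees `> n`. -/
def pdLE (M : C) (n : ℕ) : Prop :=
  ∀ i : ℕ, n < i → ∀ N : C, Subsingleton (Abelian.Ext.{w} M N i)

/-- The projective dimension of an object, valued in `ℕ∞`. -/
noncomputable def pd (M : C) : ℕ∞ :=
  sInf ((fun n : ℕ => (n : ℕ∞)) '' {n | pdLE.{w} M n})

/-- The projective dimension of a class of objects. -/
noncomputable def pdClass (𝒜 : Set C) : ℕ∞ := ⨆ M ∈ 𝒜, pd.{w} M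

/-- The `𝔓_𝒮`-condition of the second correspondence theorem. -/
def PPair (𝒮 ℱ 𝒢 : Set C) : Prop :=
  CompleteCutCotorsion.{w} ℱ 𝒢 (ThickClosure ℱ) ∧
  ExtPairVanish.{w} ℱ 𝒢 ∧
  IsRelativeGenerator (ℱ ∩ 𝒢 ∩ 𝒮) (ℱ ∩ 𝒢) ∧
  IsRelativeCogenerator (ℱ ∩ 𝒢 ∩ 𝒮) (ℱ ∩ 𝒢)

end HasExt

/-- The class of projective objects of `C`. -/
def ProjClass (C : Type u) [Category.{v} C] : Set C := {P : C | Projective P}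

section HasExt
variable (C) [HasExt.{w} C]

/-- The finitistic dimension of `C`. -/
noncomputable def Findim : ℕ∞ := pdClass.{w} (ResFin (ProjClass C))

end HasExt



open ZeroObject


section AuxLemmas

set_option linter.unusedSectionVars false

variable [HasExt.{w} C]

lemma aux_ses_zero_self (A : C) : SES (0 : C) A A := by
  refine ⟨0, 𝟙 A, by simp, ?_⟩
  exact (ShortComplex.Splitting.ofIsZeroOfIsIso _ (isZero_zero C)
    (by dsimp; infer_instance)).shortExact

lemma aux_mem_E {𝒜 ℬ : Set C} (hℬ : (0 : C) ∈ ℬ) {A : C} (hA : A ∈ 𝒜) :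
    A ∈ EClassLeft 𝒜 ℬ :=
  ⟨0, A, hℬ, hA, aux_ses_zero_self A⟩

lemma aux_exists_section {S : ShortComplex C} (hS : S.ShortExact)
    (h : Subsingleton (Abelian.Ext.{w} S.X₃ S.X₁ 1)) :
    ∃ σ : S.X₃ ⟶ S.X₂, σ ≫ S.g = 𝟙 S.X₃ := by
  letI := HasDerivedCategory.standard C
  have hδ : hS.singleδ = 0 := by
    rw [← hS.extClass_hom, Subsingleton.elim hS.extClass 0, Abelian.Ext.zero_hom]
  obtain ⟨t, ht⟩ := Pretriangulated.Triangle.coyoneda_exact₃ _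
    hS.singleTriangle_distinguished (𝟙 ((DerivedCategory.singleFunctor C 0).obj S.X₃))
    (by change _ ≫ hS.singleδ = 0; rw [hδ, comp_zero])
  simp only [ShortComplex.ShortExact.singleTriangle_mor₂] at ht
  let e : DerivedCategory.singleFunctor C 0 ⋙ DerivedCategory.homologyFunctor C 0 ≅ 𝟭 C :=
    Functor.isoWhiskerRight ((SingleFunctors.evaluation _ _ 0).mapIso
      (DerivedCategory.singleFunctorsPostcompQIso C)) (DerivedCategory.homologyFunctor C 0) ≪≫
      Functor.associator _ _ _ ≪≫
      Functor.isoWhiskerLeft (HomologicalComplex.single C (ComplexShape.up ℤ) 0)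
        (DerivedCategory.homologyFunctorFactors C 0) ≪≫
      HomologicalComplex.homologyFunctorSingleIso C (ComplexShape.up ℤ) 0
  clear_value e
  refine ⟨e.inv.app S.X₃ ≫ (DerivedCategory.homologyFunctor C 0).map t ≫ e.hom.app S.X₂, ?_⟩
  have hnat := e.hom.naturality S.g
  dsimp at hnat
  rw [Category.assoc]
  erw [Category.assoc]
  erw [← hnat]
  erw [← Functor.map_comp_assoc]
  erw [← ht,
    CategoryTheory.Functor.map_id, Category.id_comp, Iso.inv_hom_id_app]
  rfl

lemma aux_mem_A {𝒜 ℬ : Set C} (h𝒜 : ClosedUnderDirectSummands 𝒜) {M : C}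
    (hM : M ∈ leftPerp1.{w} ℬ) (hME : M ∈ EClassLeft 𝒜 ℬ) : M ∈ 𝒜 := by
  obtain ⟨B, A, hB, hA, f, g, z, hse⟩ := hME
  obtain ⟨σ, hσ⟩ := aux_exists_section hse (hM B hB)
  exact h𝒜 σ g hσ hA

end AuxLemmas

/-- Theorem 2.17. For classes `𝒜`, `ℬ` with `𝒜` closed under direct
summands and `0 ∈ ℬ`, the following are equivalent: (a) `Ext¹(𝒜, ℬ) = 0`;
(b) `𝕊_l(𝒜, ℬ) = ℰ_l(𝒜, ℬ)`; (c) `ℰ_l(𝒜, ℬ)` is a left cotorsion cut for `(𝒜, ℬ)`;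
(d) `𝒜 = ^{⊥1}ℬ ∩ ℰ_l(𝒜, ℬ)`. -/
theorem maxLeftCut_eq_eClassLeft_tfae
    {C : Type u} [CategoryTheory.Category.{v} C] [CategoryTheory.Abelian C]
    [CategoryTheory.HasExt.{w} C]
    (𝒜 ℬ : Set C) (h𝒜 : ClosedUnderDirectSummands 𝒜) (hℬ : (0 : C) ∈ ℬ) :
    ((∀ A ∈ 𝒜, ∀ B ∈ ℬ, ext1Zero.{w} A B) ↔ MaxLeftCut.{w} 𝒜 ℬ = EClassLeft 𝒜 ℬ) ∧
    ((∀ A ∈ 𝒜, ∀ B ∈ ℬ, ext1Zero.{w} A B) ↔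
      CompleteLeftCutCotorsion.{w} 𝒜 ℬ (EClassLeft 𝒜 ℬ)) ∧
    ((∀ A ∈ 𝒜, ∀ B ∈ ℬ, ext1Zero.{w} A B) ↔
      𝒜 = leftPerp1.{w} ℬ ∩ EClassLeft 𝒜 ℬ) := by
  have hAE : ∀ A ∈ 𝒜, A ∈ EClassLeft 𝒜 ℬ := fun A hA => aux_mem_E hℬ hA
  have hac : (∀ A ∈ 𝒜, ∀ B ∈ ℬ, ext1Zero.{w} A B) →
      CompleteLeftCutCotorsion.{w} 𝒜 ℬ (EClassLeft 𝒜 ℬ) := by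
    intro ha
    refine ⟨⟨h𝒜, ?_⟩, fun S hS => hS⟩
    ext M
    constructor
    · rintro ⟨hM𝒜, hME⟩
      exact ⟨fun B hB => ha M hM𝒜 B hB, hME⟩
    · rintro ⟨hMp, hME⟩
      exact ⟨aux_mem_A h𝒜 hMp hME, hME⟩
  have hca : CompleteLeftCutCotorsion.{w} 𝒜 ℬ (EClassLeft 𝒜 ℬ) →
      (∀ A ∈ 𝒜, ∀ B ∈ ℬ, ext1Zero.{w} A B) := by
    intro hc A hA B hB
    have hmem : A ∈ leftPerp1.{w} ℬ ∩ EClassLeft 𝒜 ℬ := by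
      rw [← hc.1.2]; exact ⟨hA, hAE A hA⟩
    exact hmem.1 B hB
  refine ⟨⟨?_, ?_⟩, ⟨hac, hca⟩, ⟨?_, ?_⟩⟩
  · intro ha
    apply Set.Subset.antisymm
    · rintro S ⟨𝒮, h𝒮, hS⟩
      obtain ⟨B, A, hB, hA, hses⟩ := h𝒮.2 S hS
      exact ⟨B, A, hB, hA, hses⟩
    · intro S hS
      exact ⟨EClassLeft 𝒜 ℬ, hac ha, hS⟩
  · intro hb A hA B hB
    have hmax : A ∈ MaxLeftCut.{w} 𝒜 ℬ := hb ▸ hAE A hA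
    obtain ⟨𝒮, h𝒮, hS⟩ := hmax
    have hperp : A ∈ leftPerp1.{w} ℬ ∩ 𝒮 := by rw [← h𝒮.1.2]; exact ⟨hA, hS⟩
    exact hperp.1 B hB
  · intro ha
    apply Set.Subset.antisymm
    · intro A hA
      exact ⟨fun B hB => ha A hA B hB, hAE A hA⟩
    · rintro M ⟨hMp, hME⟩
      exact aux_mem_A h𝒜 hMp hME
  · intro hd A hA B hB
    have hp : A ∈ leftPerp1.{w} ℬ ∩ EClassLeft 𝒜 ℬ := hd ▸ hA
    exact hp.1 B hB


end CutPaper
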